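/- For p ∈ [0,1] and symmetric PSD P (n×n), PD R (m×m), the Riccati-type map g_ρ(P) = A^T P A + Q − ρ (B^T P A)^T (B^T P B + R)^{-1} (B^T P A) with ρ = p(1−p) maps symmetric PSD matrices to symmetric PSD matrices (given Q symmetric PSD). -/

import Mathlib

open Matrix

lemma psd_smul_aux {k : ℕ} {M : Matrix (Fin k) (Fin k) ℝ} (hM : M.PosSemidef)
    {c : ℝ} (hc : 0 ≤ c) : (c • M).PosSemidef := by
  refine ⟨?_, fun x => ?_⟩
  · unfold Matrix.IsHermitian
    rw [conjTranspose_smul, hM.1]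
    simp
  · exact (hM.smul hc).2 x

/-- The Riccati-type map `g_ρ(P) = AᵀPA + Q - ρ (BᵀPA)ᵀ (BᵀPB + R)⁻¹ (BᵀPA)`
with `ρ = p(1-p)`, `p ∈ [0,1]`, maps symmetric PSD matrices to symmetric PSD
matrices (given `Q` symmetric PSD, `R` symmetric PD). -/
theorem riccati_map_psd {n m : ℕ}
    (Q A P : Matrix (Fin n) (Fin n) ℝ) (R : Matrix (Fin m) (Fin m) ℝ)
    (B : Matrix (Fin n) (Fin m) ℝ)
    (hQ : Q.PosSemidef) (hR : R.PosDef) (hP : P.PosSemidef)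
    (p ρ : ℝ) (hp : p ∈ Set.Icc (0:ℝ) 1) (hρ : ρ = p * (1 - p)) :
    (Aᵀ * P * A + Q -
      ρ • ((Bᵀ * P * A)ᵀ * (Bᵀ * P * B + R)⁻¹ * (Bᵀ * P * A))).PosSemidef := by
  obtain ⟨hp0, hp1⟩ := hp
  have hρ0 : 0 ≤ ρ := by nlinarith
  have hρ1 : ρ ≤ 1 := by nlinarith
  have hPt : Pᵀ = P := hP.1
  have hM : (Bᵀ * P * B + R).PosDef := by
    have h1 : (Bᵀ * P * B).PosSemidef := by simpa using hP.conjTranspose_mul_mul_same B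
    exact Matrix.PosDef.posSemidef_add h1 hR
  have : Invertible (Bᵀ * P * B + R) := hM.isUnit.invertible
  have hct : (Aᵀ * P * B)ᴴ = Bᵀ * P * A := by
    rw [conjTranspose_eq_transpose_of_trivial]
    simp [Matrix.transpose_mul, hPt, Matrix.mul_assoc]
  -- the full block matrix is PSD
  have h1 : (fromBlocks (Aᵀ * P * A) (Aᵀ * P * B) (Bᵀ * P * A) (Bᵀ * P * B)).PosSemidef := by
    have h := hP.conjTranspose_mul_mul_same (fromCols A B)
    have heq : (fromCols A B)ᴴ * P * fromCols A B =
        fromBlocks (Aᵀ * P * A) (Aᵀ * P * B) (Bᵀ * P * A) (Bᵀ * P * B) := by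
      rw [conjTranspose_eq_transpose_of_trivial, transpose_fromCols, fromRows_mul,
        fromRows_mul_fromCols]
    rwa [heq] at h
  have h2 : (fromBlocks (0 : Matrix (Fin n) (Fin n) ℝ) (0 : Matrix (Fin n) (Fin m) ℝ)
      (0 : Matrix (Fin m) (Fin n) ℝ) R).PosSemidef := by
    have h := hR.posSemidef.conjTranspose_mul_mul_same
      (fromCols (0 : Matrix (Fin m) (Fin n) ℝ) (1 : Matrix (Fin m) (Fin m) ℝ))
    have heq : (fromCols (0 : Matrix (Fin m) (Fin n) ℝ) (1 : Matrix (Fin m) (Fin m) ℝ))ᴴ * R *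
        fromCols (0 : Matrix (Fin m) (Fin n) ℝ) (1 : Matrix (Fin m) (Fin m) ℝ) =
        fromBlocks 0 0 0 R := by
      rw [conjTranspose_eq_transpose_of_trivial, transpose_fromCols, fromRows_mul,
        fromRows_mul_fromCols]
      simp
    rwa [heq] at h
  have hblock : (fromBlocks (Aᵀ * P * A) (Aᵀ * P * B) (Bᵀ * P * A) (Bᵀ * P * B + R)).PosSemidef := by
    have := h1.add h2
    rwa [fromBlocks_add, add_zero, add_zero, add_zero] at this
  have hschur : (Aᵀ * P * A - (Aᵀ * P * B) * (Bᵀ * P * B + R)⁻¹ * (Aᵀ * P * B)ᴴ).PosSemidef := by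
    rw [← PosDef.fromBlocks₂₂ _ _ hM]
    rwa [hct]
  have hT : ((Bᵀ * P * A)ᵀ * (Bᵀ * P * B + R)⁻¹ * (Bᵀ * P * A)).PosSemidef := by
    have h := hM.inv.posSemidef.conjTranspose_mul_mul_same (Bᵀ * P * A)
    rwa [conjTranspose_eq_transpose_of_trivial] at h
  have hTeq : (Aᵀ * P * B) * (Bᵀ * P * B + R)⁻¹ * (Aᵀ * P * B)ᴴ =
      (Bᵀ * P * A)ᵀ * (Bᵀ * P * B + R)⁻¹ * (Bᵀ * P * A) := by
    rw [hct]
    congr 2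
    simp [Matrix.transpose_mul, hPt, Matrix.mul_assoc]
  rw [hTeq] at hschur
  have key : Aᵀ * P * A + Q -
      ρ • ((Bᵀ * P * A)ᵀ * (Bᵀ * P * B + R)⁻¹ * (Bᵀ * P * A)) =
      (Aᵀ * P * A - (Bᵀ * P * A)ᵀ * (Bᵀ * P * B + R)⁻¹ * (Bᵀ * P * A)) + Q +
      (1 - ρ) • ((Bᵀ * P * A)ᵀ * (Bᵀ * P * B + R)⁻¹ * (Bᵀ * P * A)) := by
    module
  rw [key]
  exact ((hschur.add hQ).add (psd_smul_aux hT (by linarith)))
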